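/- Let (G, v₀) be a well-posed instance on a finite connected weighted undirected graph. Then there exists a unique extension v of v₀ to all vertices such that for every other extension v′ ≠ v, the sorted-decreasing vector of absolute edge gradients of v is strictly lexicographically smaller than that of v′ (existence and uniqueness of the lex-minimizer). -/

import Mathlib

/-- Total length of a walk in a graph with edge lengths `ℓ`. -/
noncomputable def walkLen {V : Type*} (ℓ : Sym2 V → ℝ) {G : SimpleGraph V} {u v : V}
    (p : G.Walk u v) : ℝ :=
  (p.darts.map fun d => ℓ d.edge).sum

/-- Shortest-path distance induced by edge lengths `ℓ`. -/
noncomputable def gdist {V : Type*} (G : SimpleGraph V) (ℓ : Sym2 V → ℝ) (u v : V) : ℝ :=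
  sInf {x | ∃ p : G.Walk u v, walkLen ℓ p = x}

/-- Absolute gradient `|v x - v y| / ℓ(x,y)` of `v` on the unordered pair `e`. -/
noncomputable def absGrad {V : Type*} (ℓ : Sym2 V → ℝ) (v : V → ℝ) (e : Sym2 V) : ℝ :=
  Sym2.lift ⟨fun x y => |v x - v y|, fun x y => abs_sub_comm (v x) (v y)⟩ e / ℓ e

/-- The absolute edge gradients of `v`, sorted in decreasing order. -/
noncomputable def gradList {V : Type*} [Fintype V] [DecidableEq V] (G : SimpleGraph V)
    [DecidableRel G.Adj] (ℓ : Sym2 V → ℝ) (v : V → ℝ) : List ℝ :=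
  (G.edgeFinset.val.map (absGrad ℓ v)).sort (· ≥ ·)

set_option linter.unusedSectionVars false
set_option linter.unusedVariables false
set_option linter.unnecessarySimpa false

section AuxLists

lemma exists_le_map_aux {α β : Type*} [DecidableEq α] [DecidableEq β] (f : α → β) :
    ∀ (t : Multiset β) (s : Multiset α), t ≤ s.map f → ∃ u ≤ s, u.map f = t := by
  intro t
  induction t using Multiset.induction_on with
  | empty => intro s _; exact ⟨0, Multiset.zero_le s, Multiset.map_zero f⟩
  | cons b t ih =>
    intro s h
    have hb : b ∈ s.map f := Multiset.mem_of_le h (Multiset.mem_cons_self b t)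
    obtain ⟨a, ha, rfl⟩ := Multiset.mem_map.mp hb
    have ht' : t ≤ (s.erase a).map f := by
      rw [Multiset.map_erase_of_mem f s ha]
      have := Multiset.erase_le_erase (f a) h
      rwa [Multiset.erase_cons_head] at this
    obtain ⟨u, hu, hmap⟩ := ih (s.erase a) ht'
    refine ⟨a ::ₘ u, ?_, by rw [Multiset.map_cons, hmap]⟩
    calc a ::ₘ u ≤ a ::ₘ s.erase a := Multiset.cons_le_cons a hu
    _ = s := Multiset.cons_erase ha

lemma take_sum_cons_ge (b : ℝ) (L : List ℝ) (k : ℕ) (hb0 : 0 ≤ b)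
    (hb : ∀ x ∈ L, x ≤ b) : (L.take k).sum ≤ ((b :: L).take k).sum := by
  cases k with
  | zero => simp
  | succ j =>
    rw [List.take_succ_cons, List.sum_cons]
    rcases lt_or_ge j L.length with hj | hj
    · rw [List.sum_take_succ L j hj]
      have : L[j] ≤ b := hb _ (List.getElem_mem hj)
      linarith
    · rw [List.take_of_length_le hj, List.take_of_length_le (by omega)]
      linarith

lemma sum_sublist_le_sum_take {l L : List ℝ} (hs : l.Sublist L)
    (hL : L.Pairwise (· ≥ ·)) (hnn : ∀ x ∈ L, 0 ≤ x) :
    l.sum ≤ (L.take l.length).sum := by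
  induction hs with
  | slnil => simp
  | @cons l L b hsub ih =>
    have hL' : L.Pairwise (· ≥ ·) := hL.of_cons
    have hnn' : ∀ x ∈ L, 0 ≤ x := fun x hx => hnn x (List.mem_cons_of_mem b hx)
    refine (ih hL' hnn').trans (take_sum_cons_ge b L l.length
      (hnn b (List.mem_cons_self (a := b) (l := L))) ?_)
    intro x hx
    exact List.rel_of_pairwise_cons hL hx
  | @cons_cons l L b hsub ih =>
    have hL' : L.Pairwise (· ≥ ·) := hL.of_cons
    have hnn' : ∀ x ∈ L, 0 ≤ x := fun x hx => hnn x (List.mem_cons_of_mem b hx)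
    simp only [List.length_cons, List.take_succ_cons, List.sum_cons]
    exact add_le_add_right (ih hL' hnn') b

lemma lex_of_get : ∀ (i : ℕ) (l l' : List ℝ), ∀ (hi : i < l.length) (hi' : i < l'.length),
    (∀ j (hj : j < i), l.get ⟨j, by omega⟩ = l'.get ⟨j, by omega⟩) →
    l.get ⟨i, hi⟩ < l'.get ⟨i, hi'⟩ → List.Lex (· < ·) l l'
  | 0, a :: t, b :: t', _, _, _, hlt => List.Lex.rel (by simpa using hlt)
  | (i+1), a :: t, b :: t', hi, hi', hpre, hlt => by
    have hab : a = b := by simpa using hpre 0 (Nat.succ_pos i)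
    subst hab
    exact List.Lex.cons (lex_of_get i t t' (by simpa using hi) (by simpa using hi')
      (fun j hj => by simpa using hpre (j+1) (by omega)) (by simpa using hlt))

lemma lex_asymm : ∀ {l l' : List ℝ}, List.Lex (· < ·) l l' → List.Lex (· < ·) l' l → False := by
  intro l l' h1
  induction h1 with
  | nil => intro h2; cases h2
  | @rel a l b l' h =>
    intro h2
    cases h2 with
    | rel h' => exact absurd h (asymm h')
    | cons h' => exact lt_irrefl _ h
  | @cons a l l' h ih =>
    intro h2
    cases h2 with
    | rel h' => exact lt_irrefl _ h'
    | cons h' => exact ih h'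

end AuxLists

section AuxTopf

variable {V : Type*} [Fintype V] [DecidableEq V] {G : SimpleGraph V}
  [DecidableRel G.Adj] {ℓ : Sym2 V → ℝ}

/-- The sum of the `k` largest absolute gradients, as a max over `k`-subsets of edges. -/
noncomputable def topf (G : SimpleGraph V) [DecidableRel G.Adj] (ℓ : Sym2 V → ℝ)
    (k : ℕ) (v : V → ℝ) : ℝ :=
  if h : (G.edgeFinset.powersetCard k).Nonempty then
    (G.edgeFinset.powersetCard k).sup' h (fun S => ∑ e ∈ S, absGrad ℓ v e) else 0

lemma absGrad_mk (v : V → ℝ) (x y : V) :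
    absGrad ℓ v s(x, y) = |v x - v y| / ℓ s(x, y) := by
  simp [absGrad]

lemma absGrad_nonneg' (hℓ : ∀ e ∈ G.edgeSet, 0 < ℓ e) {e : Sym2 V} (he : e ∈ G.edgeSet)
    (v : V → ℝ) : 0 ≤ absGrad ℓ v e := by
  have h1 : 0 ≤ Sym2.lift ⟨fun x y => |v x - v y|, fun x y => abs_sub_comm (v x) (v y)⟩ e := by
    induction e using Sym2.inductionOn with
    | hf x y => simpa using abs_nonneg _
  exact div_nonneg h1 (hℓ e he).le

lemma gradList_length (v : V → ℝ) : (gradList G ℓ v).length = G.edgeFinset.card := by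
  rw [gradList, Multiset.length_sort, Multiset.card_map]; rfl

lemma gradList_nonneg (hℓ : ∀ e ∈ G.edgeSet, 0 < ℓ e) (v : V → ℝ) :
    ∀ x ∈ gradList G ℓ v, 0 ≤ x := by
  intro x hx
  rw [gradList, Multiset.mem_sort, Multiset.mem_map] at hx
  obtain ⟨e, he, rfl⟩ := hx
  exact absGrad_nonneg' hℓ (SimpleGraph.mem_edgeFinset.1 he) v

lemma take_gradList_eq_topf (hℓ : ∀ e ∈ G.edgeSet, 0 < ℓ e) (v : V → ℝ) {k : ℕ}
    (hk : k ≤ G.edgeFinset.card) :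
    ((gradList G ℓ v).take k).sum = topf G ℓ k v := by
  classical
  have hne : (G.edgeFinset.powersetCard k).Nonempty := Finset.powersetCard_nonempty.2 hk
  rw [topf, dif_pos hne]
  set g := absGrad ℓ v with hg
  set m : Multiset ℝ := G.edgeFinset.val.map g with hm
  set L : List ℝ := gradList G ℓ v with hL
  have hcoe : (L : Multiset ℝ) = m := Multiset.sort_eq _ _
  have hlen : L.length = G.edgeFinset.card := gradList_length v
  have hsorted : L.Pairwise (· ≥ ·) := Multiset.pairwise_sort _ _
  have hnn : ∀ x ∈ L, 0 ≤ x := gradList_nonneg hℓ v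
  apply le_antisymm
  · have hsub : (L.take k).Sublist L := List.take_sublist k L
    have hle : ((L.take k : List ℝ) : Multiset ℝ) ≤ m := by
      rw [← hcoe]; exact Multiset.coe_le.2 hsub.subperm
    obtain ⟨u, hu, hmap⟩ := exists_le_map_aux g _ _ hle
    have hnodup : u.Nodup := Multiset.nodup_of_le hu G.edgeFinset.nodup
    have hcard : Multiset.card u = k := by
      have := congrArg Multiset.card hmap
      rw [Multiset.card_map, Multiset.coe_card, List.length_take, hlen] at this
      omega
    refine le_trans (le_of_eq ?_) (Finset.le_sup' _ (Finset.mem_powersetCard.2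
      ⟨Finset.val_le_iff.1 hu, hcard⟩ : (⟨u, hnodup⟩ : Finset (Sym2 V)) ∈ _))
    show (L.take k).sum = ∑ e ∈ (⟨u, hnodup⟩ : Finset (Sym2 V)), g e
    rw [Finset.sum_eq_multiset_sum]
    show (L.take k).sum = (u.map g).sum
    rw [hmap]; rfl
  · refine Finset.sup'_le _ _ fun S hS => ?_
    obtain ⟨hSsub, hScard⟩ := Finset.mem_powersetCard.1 hS
    have hle : (S.val.map g) ≤ m := Multiset.map_le_map (Finset.val_le_iff.2 hSsub)
    have hScard' : Multiset.card S.val = k := hScard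
    set t := S.val.map g with ht
    have htL : (↑t.toList : Multiset ℝ) ≤ (↑L : Multiset ℝ) := by
      rw [Multiset.coe_toList, hcoe]; exact hle
    obtain ⟨l', hperm, hsl⟩ := Multiset.coe_le.1 htL
    have hlen' : l'.length = k := by
      rw [hperm.length_eq, Multiset.length_toList, ht, Multiset.card_map, hScard']
    have := sum_sublist_le_sum_take hsl hsorted hnn
    rw [hlen'] at this
    calc ∑ e ∈ S, g e = t.sum := by rw [Finset.sum_eq_multiset_sum]
    _ = l'.sum := by rw [← Multiset.sum_toList, ← hperm.sum_eq]
    _ ≤ (L.take k).sum := this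

lemma topf_nonneg (hℓ : ∀ e ∈ G.edgeSet, 0 < ℓ e) (k : ℕ) (v : V → ℝ) :
    0 ≤ topf G ℓ k v := by
  rw [topf]
  split_ifs with h
  · obtain ⟨S, hS⟩ := h
    refine le_trans ?_ (Finset.le_sup' _ hS)
    exact Finset.sum_nonneg fun e he => absGrad_nonneg' hℓ
      (SimpleGraph.mem_edgeFinset.1 ((Finset.mem_powersetCard.1 hS).1 he)) v
  · exact le_rfl

lemma continuous_finset_sup'' {ι X : Type*} [TopologicalSpace X] (s : Finset ι)
    (hs : s.Nonempty) (F : ι → X → ℝ) (hF : ∀ i ∈ s, Continuous (F i)) :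
    Continuous fun x => s.sup' hs (fun i => F i x) := by
  induction hs using Finset.Nonempty.cons_induction with
  | singleton i =>
    have : (fun x => ({i} : Finset ι).sup' (Finset.singleton_nonempty i) (fun j => F j x)) = F i := by
      ext x; simp
    rw [this]; exact hF i (by simp)
  | cons i s hi hs ih =>
    have heq : (fun x => (Finset.cons i s hi).sup' (Finset.cons_nonempty hi) (fun j => F j x))
        = fun x => max (F i x) (s.sup' hs (fun j => F j x)) := by
      ext x
      rw [Finset.sup'_cons hs]
    rw [heq]
    exact Continuous.max (hF i (by simp)) (ih fun j hj => hF j (Finset.mem_cons_of_mem hj))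

lemma continuous_absGrad' (ℓ : Sym2 V → ℝ) (e : Sym2 V) :
    Continuous fun v : V → ℝ => absGrad ℓ v e := by
  induction e using Sym2.inductionOn with
  | hf x y =>
    simp only [absGrad, Sym2.lift_mk]
    exact (((continuous_apply x).sub (continuous_apply y)).abs).div_const _

lemma topf_continuous (k : ℕ) : Continuous (topf G ℓ k) := by
  unfold topf
  by_cases h : (G.edgeFinset.powersetCard k).Nonempty
  · simp only [dif_pos h]
    exact continuous_finset_sup'' _ h _ fun S _ =>
      continuous_finset_sum S fun e _ => continuous_absGrad' ℓ e
  · simp only [dif_neg h]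
    exact continuous_const

lemma absGrad_mid' (hℓ : ∀ e ∈ G.edgeSet, 0 < ℓ e) (v w : V → ℝ)
    {e : Sym2 V} (he : e ∈ G.edgeSet) :
    absGrad ℓ (fun x => (v x + w x) / 2) e ≤ (absGrad ℓ v e + absGrad ℓ w e) / 2 := by
  have hl : 0 < ℓ e := hℓ e he
  induction e using Sym2.inductionOn with
  | hf x y =>
    simp only [absGrad, Sym2.lift_mk] at *
    have key : |(v x + w x) / 2 - (v y + w y) / 2| ≤ (|v x - v y| + |w x - w y|) / 2 := by
      have h1 : (v x + w x) / 2 - (v y + w y) / 2 = ((v x - v y) + (w x - w y)) / 2 := by ring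
      rw [h1, abs_div, abs_of_pos (by norm_num : (0:ℝ) < 2)]
      gcongr
      exact abs_add_le _ _
    have h2 : (|v x - v y| / ℓ s(x, y) + |w x - w y| / ℓ s(x, y)) / 2
        = ((|v x - v y| + |w x - w y|) / 2) / ℓ s(x, y) := by ring
    rw [h2]
    gcongr

lemma topf_mid (hℓ : ∀ e ∈ G.edgeSet, 0 < ℓ e) (k : ℕ) (v w : V → ℝ) :
    topf G ℓ k (fun x => (v x + w x) / 2) ≤ (topf G ℓ k v + topf G ℓ k w) / 2 := by
  unfold topf
  by_cases h : (G.edgeFinset.powersetCard k).Nonempty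
  · simp only [dif_pos h]
    refine Finset.sup'_le _ _ fun S hS => ?_
    have hsub : ∀ e ∈ S, e ∈ G.edgeSet := fun e he =>
      SimpleGraph.mem_edgeFinset.1 ((Finset.mem_powersetCard.1 hS).1 he)
    calc ∑ e ∈ S, absGrad ℓ (fun x => (v x + w x) / 2) e
        ≤ ∑ e ∈ S, (absGrad ℓ v e + absGrad ℓ w e) / 2 :=
          Finset.sum_le_sum fun e he => absGrad_mid' hℓ v w (hsub e he)
      _ = ((∑ e ∈ S, absGrad ℓ v e) + ∑ e ∈ S, absGrad ℓ w e) / 2 := by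
          rw [← Finset.sum_add_distrib, Finset.sum_div]
      _ ≤ _ := by
          gcongr
          · exact Finset.le_sup' (fun S => ∑ e ∈ S, absGrad ℓ v e) hS
          · exact Finset.le_sup' (fun S => ∑ e ∈ S, absGrad ℓ w e) hS
  · simp only [dif_neg h]
    norm_num

lemma absGrad_le_topf_one (hℓ : ∀ e ∈ G.edgeSet, 0 < ℓ e) (v : V → ℝ) {e : Sym2 V}
    (he : e ∈ G.edgeFinset) : absGrad ℓ v e ≤ topf G ℓ 1 v := by
  have hne : (G.edgeFinset.powersetCard 1).Nonempty :=
    Finset.powersetCard_nonempty.2 (Finset.card_pos.2 ⟨e, he⟩)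
  rw [topf, dif_pos hne]
  have hmem : {e} ∈ G.edgeFinset.powersetCard 1 :=
    Finset.mem_powersetCard.2 ⟨Finset.singleton_subset_iff.2 he, Finset.card_singleton e⟩
  refine le_trans (le_of_eq ?_) (Finset.le_sup' (fun S => ∑ e ∈ S, absGrad ℓ v e) hmem)
  simp

lemma abs_sub_le_topf_one_mul (hℓ : ∀ e ∈ G.edgeSet, 0 < ℓ e) (v : V → ℝ) {x y : V}
    (p : G.Walk x y) : |v x - v y| ≤ topf G ℓ 1 v * walkLen ℓ p := by
  have htel : |v x - v y| ≤ (p.darts.map fun d => |v d.toProd.1 - v d.toProd.2|).sum := by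
    clear hℓ
    induction p with
    | nil => simp
    | @cons a b c h p ih =>
      simp only [SimpleGraph.Walk.darts_cons, List.map_cons, List.sum_cons]
      calc |v a - v c| ≤ |v a - v b| + |v b - v c| := abs_sub_le _ _ _
      _ ≤ |v a - v b| + (p.darts.map fun d => |v d.toProd.1 - v d.toProd.2|).sum :=
          add_le_add_right ih _
  refine htel.trans ?_
  have hstep : ∀ d ∈ p.darts, |v d.toProd.1 - v d.toProd.2| ≤ topf G ℓ 1 v * ℓ d.edge := by
    intro d _
    have he : d.edge ∈ G.edgeSet := d.edge_mem
    have hl : 0 < ℓ d.edge := hℓ _ he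
    have heq : |v d.toProd.1 - v d.toProd.2| = absGrad ℓ v d.edge * ℓ d.edge := by
      have hd : d.edge = s(d.toProd.1, d.toProd.2) := rfl
      rw [hd, absGrad_mk, div_mul_cancel₀]
      exact (hℓ _ (hd ▸ he)).ne'
    rw [heq]
    exact mul_le_mul_of_nonneg_right
      (absGrad_le_topf_one hℓ v (SimpleGraph.mem_edgeFinset.2 he)) hl.le
  calc (p.darts.map fun d => |v d.toProd.1 - v d.toProd.2|).sum
      ≤ (p.darts.map fun d => topf G ℓ 1 v * ℓ d.edge).sum := List.sum_le_sum hstep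
    _ = topf G ℓ 1 v * walkLen ℓ p := by rw [List.sum_map_mul_left, walkLen]

lemma walkLen_nonneg (hℓ : ∀ e ∈ G.edgeSet, 0 < ℓ e) {x y : V} (p : G.Walk x y) :
    0 ≤ walkLen ℓ p := by
  rw [walkLen]
  refine List.sum_nonneg fun a ha => ?_
  obtain ⟨d, hd, rfl⟩ := List.mem_map.1 ha
  exact (hℓ _ d.edge_mem).le

end AuxTopf

/-- Existence and uniqueness of the lex-minimizer: there is a unique extension of
`v₀` whose sorted-decreasing vector of absolute edge gradients is strictly
lexicographically smaller than that of every other extension. -/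
theorem lex_min_exists_unique {V : Type*} [Fintype V] [DecidableEq V]
    (G : SimpleGraph V) [DecidableRel G.Adj] (hG : G.Connected)
    (ℓ : Sym2 V → ℝ) (hℓ : ∀ e ∈ G.edgeSet, 0 < ℓ e)
    (T : Set V) (hT : T.Nonempty) (v₀ : V → ℝ) :
    ∃! v : V → ℝ, (∀ t ∈ T, v t = v₀ t) ∧
      ∀ w : V → ℝ, (∀ t ∈ T, w t = v₀ t) → w ≠ v →
        List.Lex (· < ·) (gradList G ℓ v) (gradList G ℓ w) := by
  classical
  obtain ⟨t0, ht0⟩ := hT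
  by_cases hn0 : G.edgeFinset.card = 0
  · -- degenerate case: no edges, so `V` is a subsingleton
    have hempty : G.edgeFinset = ∅ := Finset.card_eq_zero.1 hn0
    have hwalk : ∀ {x y : V}, G.Walk x y → x = y := by
      intro x y p
      induction p with
      | nil => rfl
      | @cons a b c h p ih =>
        exfalso
        have : s(a, b) ∈ G.edgeFinset := SimpleGraph.mem_edgeFinset.2 h
        simp [hempty] at this
    have hsub : ∀ x : V, x = t0 := fun x => hwalk (hG.preconnected x t0).some
    refine ⟨v₀, ⟨fun t _ => rfl, ?_⟩, ?_⟩
    · intro w hw hne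
      exfalso
      apply hne
      funext x
      rw [hsub x, hw t0 ht0]
    · intro y hy
      funext x
      rw [hsub x, hy.1 t0 ht0]
  · have hn : 1 ≤ G.edgeFinset.card := Nat.one_le_iff_ne_zero.2 hn0
    set n := G.edgeFinset.card with hndef
    set B : Set (V → ℝ) := {v | (∀ t ∈ T, v t = v₀ t) ∧ topf G ℓ 1 v ≤ topf G ℓ 1 v₀}
      with hBdef
    have hv₀B : v₀ ∈ B := ⟨fun t _ => rfl, le_rfl⟩
    have hBclosed : IsClosed B := by
      have h1 : IsClosed {v : V → ℝ | ∀ t ∈ T, v t = v₀ t} := by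
        have heq : {v : V → ℝ | ∀ t ∈ T, v t = v₀ t} = ⋂ t ∈ T, {v | v t = v₀ t} := by
          ext v; simp
        rw [heq]
        exact isClosed_biInter fun t ht => isClosed_eq (continuous_apply t) continuous_const
      have h2 : IsClosed {v : V → ℝ | topf G ℓ 1 v ≤ topf G ℓ 1 v₀} :=
        isClosed_Iic.preimage (topf_continuous 1)
      exact h1.inter h2
    have hBcomp : IsCompact B := by
      set pw : (x : V) → G.Walk t0 x := fun x => (hG.preconnected t0 x).some with hpw
      set M : V → ℝ := fun x => topf G ℓ 1 v₀ * walkLen ℓ (pw x) with hM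
      have hBsub : B ⊆ Set.pi Set.univ (fun x => Set.Icc (v₀ t0 - M x) (v₀ t0 + M x)) := by
        intro v hv x _
        have h1 : |v t0 - v x| ≤ topf G ℓ 1 v * walkLen ℓ (pw x) :=
          abs_sub_le_topf_one_mul hℓ v (pw x)
        have h2 : topf G ℓ 1 v * walkLen ℓ (pw x) ≤ M x :=
          mul_le_mul_of_nonneg_right hv.2 (walkLen_nonneg hℓ (pw x))
        have h3 : |v x - v₀ t0| ≤ M x := by
          rw [← hv.1 t0 ht0, abs_sub_comm]; exact h1.trans h2
        have h4 := abs_le.1 h3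
        exact ⟨by linarith [h4.1], by linarith [h4.2]⟩
      exact IsCompact.of_isClosed_subset
        (isCompact_univ_pi fun x => isCompact_Icc) hBclosed hBsub
    have hBmid : ∀ v w, v ∈ B → w ∈ B → (fun x => (v x + w x) / 2) ∈ B := by
      intro v w hv hw
      refine ⟨fun t ht => by show (v t + w t) / 2 = v₀ t; rw [hv.1 t ht, hw.1 t ht]; ring, ?_⟩
      calc topf G ℓ 1 (fun x => (v x + w x) / 2)
          ≤ (topf G ℓ 1 v + topf G ℓ 1 w) / 2 := topf_mid hℓ 1 v w
        _ ≤ topf G ℓ 1 v₀ := by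
            have := hv.2; have := hw.2; linarith
    -- the chain of argmin sets
    let A : ℕ → Set (V → ℝ) := fun k =>
      Nat.rec B (fun k Ak => {v | v ∈ Ak ∧ topf G ℓ (k+1) v ≤ sInf (topf G ℓ (k+1) '' Ak)}) k
    have hA0 : A 0 = B := rfl
    have hAs : ∀ k, A (k+1)
        = {v | v ∈ A k ∧ topf G ℓ (k+1) v ≤ sInf (topf G ℓ (k+1) '' A k)} := fun _ => rfl
    have hBddB : ∀ (s : Set (V → ℝ)) (k : ℕ), BddBelow (topf G ℓ k '' s) := by
      intro s k
      exact ⟨0, fun b hb => by obtain ⟨u, hu, rfl⟩ := hb; exact topf_nonneg hℓ k u⟩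
    have hInv : ∀ k, IsCompact (A k) ∧ (A k).Nonempty ∧
        (∀ v w, v ∈ A k → w ∈ A k → (fun x => (v x + w x) / 2) ∈ A k) ∧ A k ⊆ B := by
      intro k
      induction k with
      | zero => exact ⟨hBcomp, ⟨v₀, hv₀B⟩, hBmid, fun v hv => hv⟩
      | succ k ih =>
        obtain ⟨hcomp, hne, hmid, hsubB⟩ := ih
        obtain ⟨z, hzA, hzmin⟩ :=
          hcomp.exists_isMinOn hne (topf_continuous (G := G) (ℓ := ℓ) (k+1)).continuousOn
        have hz2 : topf G ℓ (k+1) z ≤ sInf (topf G ℓ (k+1) '' A k) :=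
          le_csInf (hne.image _) fun b hb => by
            obtain ⟨u, hu, rfl⟩ := hb; exact hzmin hu
        have hclosed : IsClosed (A (k+1)) := by
          rw [hAs k]
          exact (hcomp.isClosed).inter (isClosed_Iic.preimage (topf_continuous (k+1)))
        refine ⟨?_, ⟨z, by rw [hAs k]; exact ⟨hzA, hz2⟩⟩, ?_, ?_⟩
        · exact IsCompact.of_isClosed_subset hcomp hclosed
            (by rw [hAs k]; exact fun v hv => hv.1)
        · intro v w hv hw
          rw [hAs k] at hv hw ⊢
          refine ⟨hmid _ _ hv.1 hw.1, ?_⟩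
          calc topf G ℓ (k+1) (fun x => (v x + w x) / 2)
              ≤ (topf G ℓ (k+1) v + topf G ℓ (k+1) w) / 2 := topf_mid hℓ _ v w
            _ ≤ sInf (topf G ℓ (k+1) '' A k) := by
                have := hv.2; have := hw.2; linarith
        · rw [hAs k]; exact fun v hv => hsubB hv.1
    have hchain_le : ∀ j k, j ≤ k → A k ⊆ A j := by
      intro j k hjk
      induction hjk with
      | refl => exact fun v hv => hv
      | @step m hm ih => exact fun v hv => ih ((hAs m ▸ hv).1)
    have hminval : ∀ k (v w : V → ℝ), v ∈ A (k+1) → w ∈ A k →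
        topf G ℓ (k+1) v ≤ topf G ℓ (k+1) w := by
      intro k v w hv hw
      exact ((hAs k ▸ hv).2).trans (csInf_le (hBddB _ _) ⟨w, hw, rfl⟩)
    obtain ⟨vs, hvs⟩ := (hInv n).2.1
    have hfeq : ∀ j, 1 ≤ j → j ≤ n → ∀ a b, a ∈ A n → b ∈ A n →
        topf G ℓ j a = topf G ℓ j b := by
      intro j h1 hjn a b ha hb
      obtain ⟨m, rfl⟩ : ∃ m, j = m + 1 := ⟨j - 1, by omega⟩
      exact le_antisymm
        (hminval m a b (hchain_le (m+1) n hjn ha) (hchain_le m n (by omega) hb))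
        (hminval m b a (hchain_le (m+1) n hjn hb) (hchain_le m n (by omega) ha))
    have hps : ∀ (p : V → ℝ) (j : ℕ), j ≤ n →
        ((gradList G ℓ p).take j).sum = topf G ℓ j p :=
      fun p j hj => take_gradList_eq_topf hℓ p hj
    have hgl : ∀ a b, a ∈ A n → b ∈ A n → gradList G ℓ a = gradList G ℓ b := by
      intro a b ha hb
      have hpsab : ∀ j, j ≤ n →
          ((gradList G ℓ a).take j).sum = ((gradList G ℓ b).take j).sum := by
        intro j hj
        rcases Nat.eq_zero_or_pos j with rfl | hj1
        · simp
        · rw [hps a j hj, hps b j hj]; exact hfeq j hj1 hj a b ha hb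
      apply List.ext_getElem (by rw [gradList_length, gradList_length])
      intro i h1 h2
      have e1 := List.sum_take_succ (gradList G ℓ a) i h1
      have e2 := List.sum_take_succ (gradList G ℓ b) i h2
      have hi : i < n := by rwa [gradList_length] at h1
      have q1 := hpsab i (by omega)
      have q2 := hpsab (i+1) (by omega)
      rw [e1, e2] at q2
      linarith
    -- uniqueness on `A n`
    have huniqAn : ∀ a b, a ∈ A n → b ∈ A n → a = b := by
      intro a b ha hb
      set u : V → ℝ := fun x => (a x + b x) / 2 with hu
      have huA : u ∈ A n := (hInv n).2.2.1 a b ha hb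
      have hmul : ∀ p q, p ∈ A n → q ∈ A n →
          G.edgeFinset.val.map (absGrad ℓ p) = G.edgeFinset.val.map (absGrad ℓ q) := by
        intro p q hp hq
        have h := hgl p q hp hq
        rw [gradList, gradList] at h
        calc G.edgeFinset.val.map (absGrad ℓ p)
            = ↑((G.edgeFinset.val.map (absGrad ℓ p)).sort (· ≥ ·)) :=
              (Multiset.sort_eq _ _).symm
          _ = ↑((G.edgeFinset.val.map (absGrad ℓ q)).sort (· ≥ ·)) := by rw [h]
          _ = G.edgeFinset.val.map (absGrad ℓ q) := Multiset.sort_eq _ _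
      have hsum : ∀ p q, p ∈ A n → q ∈ A n →
          ∑ e ∈ G.edgeFinset, absGrad ℓ p e = ∑ e ∈ G.edgeFinset, absGrad ℓ q e := by
        intro p q hp hq
        rw [Finset.sum_eq_multiset_sum, Finset.sum_eq_multiset_sum, hmul p q hp hq]
      have hsq : ∀ p q, p ∈ A n → q ∈ A n →
          ∑ e ∈ G.edgeFinset, (absGrad ℓ p e)^2 = ∑ e ∈ G.edgeFinset, (absGrad ℓ q e)^2 := by
        intro p q hp hq
        calc ∑ e ∈ G.edgeFinset, (absGrad ℓ p e)^2
            = ((G.edgeFinset.val.map (absGrad ℓ p)).map (fun x => x^2)).sum := by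
              rw [Finset.sum_eq_multiset_sum, Multiset.map_map]; rfl
          _ = ((G.edgeFinset.val.map (absGrad ℓ q)).map (fun x => x^2)).sum := by
              rw [hmul p q hp hq]
          _ = ∑ e ∈ G.edgeFinset, (absGrad ℓ q e)^2 := by
              rw [Finset.sum_eq_multiset_sum, Multiset.map_map]; rfl
      have hpt : ∀ e ∈ G.edgeFinset,
          absGrad ℓ u e = (absGrad ℓ a e + absGrad ℓ b e) / 2 := by
        have hnn : ∀ e ∈ G.edgeFinset,
            0 ≤ (absGrad ℓ a e + absGrad ℓ b e) / 2 - absGrad ℓ u e := by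
          intro e he
          have := absGrad_mid' hℓ a b (SimpleGraph.mem_edgeFinset.1 he)
          simp only [← hu] at this
          linarith
        have hzero : ∑ e ∈ G.edgeFinset,
            ((absGrad ℓ a e + absGrad ℓ b e) / 2 - absGrad ℓ u e) = 0 := by
          rw [Finset.sum_sub_distrib]
          have h1 : ∑ e ∈ G.edgeFinset, (absGrad ℓ a e + absGrad ℓ b e) / 2
              = ((∑ e ∈ G.edgeFinset, absGrad ℓ a e)
                + ∑ e ∈ G.edgeFinset, absGrad ℓ b e) / 2 := by
            rw [← Finset.sum_add_distrib, Finset.sum_div]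
          rw [h1, hsum u a huA ha, hsum a b ha hb]
          ring
        intro e he
        have := (Finset.sum_eq_zero_iff_of_nonneg hnn).1 hzero e he
        linarith
      have habs : ∀ e ∈ G.edgeFinset, absGrad ℓ a e = absGrad ℓ b e := by
        have hzero : ∑ e ∈ G.edgeFinset, ((absGrad ℓ a e - absGrad ℓ b e) / 2)^2 = 0 := by
          have hrw : ∀ e ∈ G.edgeFinset, ((absGrad ℓ a e - absGrad ℓ b e) / 2)^2
              = ((absGrad ℓ a e)^2 + (absGrad ℓ b e)^2) / 2
                - ((absGrad ℓ a e + absGrad ℓ b e) / 2)^2 := fun e _ => by ring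
          rw [Finset.sum_congr rfl hrw, Finset.sum_sub_distrib]
          have h1 : ∑ e ∈ G.edgeFinset, ((absGrad ℓ a e)^2 + (absGrad ℓ b e)^2) / 2
              = ((∑ e ∈ G.edgeFinset, (absGrad ℓ a e)^2)
                + ∑ e ∈ G.edgeFinset, (absGrad ℓ b e)^2) / 2 := by
            rw [← Finset.sum_add_distrib, Finset.sum_div]
          have h2 : ∑ e ∈ G.edgeFinset, ((absGrad ℓ a e + absGrad ℓ b e) / 2)^2
              = ∑ e ∈ G.edgeFinset, (absGrad ℓ u e)^2 :=
            Finset.sum_congr rfl fun e he => by rw [hpt e he]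
          rw [h1, h2, hsq u a huA ha, hsq a b ha hb]
          ring
        intro e he
        have h0 := (Finset.sum_eq_zero_iff_of_nonneg
          (fun e _ => sq_nonneg ((absGrad ℓ a e - absGrad ℓ b e) / 2))).1 hzero e he
        have := pow_eq_zero_iff (n := 2) (by norm_num) |>.1 h0
        linarith
      have hsigned : ∀ x y : V, G.Adj x y → a x - a y = b x - b y := by
        intro x y hxy
        have he : s(x, y) ∈ G.edgeSet := hxy
        have hef : s(x, y) ∈ G.edgeFinset := SimpleGraph.mem_edgeFinset.2 he
        have hc : 0 < ℓ s(x, y) := hℓ _ he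
        have h1 := hpt _ hef
        have h2 := habs _ hef
        rw [absGrad_mk, absGrad_mk] at h2
        have habs' : |a x - a y| = |b x - b y| := by
          field_simp [hc.ne'] at h2
          exact h2
        have h1' : |a x - a y + (b x - b y)| = |a x - a y| + |b x - b y| := by
          have hux : u x - u y = ((a x - a y) + (b x - b y)) / 2 := by
            simp only [hu]; ring
          rw [absGrad_mk, absGrad_mk, absGrad_mk, hux] at h1
          rw [abs_div, abs_of_pos (by norm_num : (0:ℝ) < 2)] at h1
          field_simp [hc.ne'] at h1
          exact h1
        rcases abs_eq_abs.1 habs' with h | h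
        · exact h
        · have hz : |a x - a y + (b x - b y)| = 0 := by rw [h]; simp
          have : |a x - a y| = 0 := by
            have n1 := abs_nonneg (a x - a y)
            have n2 := abs_nonneg (b x - b y)
            rw [hz] at h1'
            linarith
          have ha0 : a x - a y = 0 := abs_eq_zero.1 this
          rw [ha0] at h ⊢
          linarith [h]
      have hconstw : ∀ {x y : V}, G.Walk x y → a x - b x = a y - b y := by
        intro x y p
        induction p with
        | nil => rfl
        | @cons p q r h pp ih =>
          have := hsigned p q h
          linarith
      have ht0eq : a t0 = b t0 := by
        have hA : a t0 = v₀ t0 := ((hInv n).2.2.2 ha).1 t0 ht0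
        have hBB : b t0 = v₀ t0 := ((hInv n).2.2.2 hb).1 t0 ht0
        rw [hA, hBB]
      funext x
      have := hconstw ((hG.preconnected x t0).some)
      have hx : a x - b x = a t0 - b t0 := this
      have : a t0 - b t0 = 0 := by rw [ht0eq]; ring
      linarith
    -- membership in the chain from equal values
    have hmem : ∀ m, 1 ≤ m → m ≤ n → ∀ w, (∀ t ∈ T, w t = v₀ t) →
        (∀ j, 1 ≤ j → j ≤ m → topf G ℓ j w = topf G ℓ j vs) → w ∈ A m := by
      intro m
      induction m with
      | zero => intro h; exact absurd h (by omega)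
      | succ m ih =>
        intro _ hmn w hw hj
        have hvsm : vs ∈ A (m+1) := hchain_le (m+1) n hmn hvs
        have hwm : w ∈ A m := by
          rcases Nat.eq_zero_or_pos m with rfl | hm1
          · rw [hA0]
            refine ⟨hw, ?_⟩
            have h1 : topf G ℓ 1 w = topf G ℓ 1 vs := hj 1 le_rfl le_rfl
            have h2 : topf G ℓ 1 vs ≤ topf G ℓ 1 v₀ := ((hInv n).2.2.2 hvs).2
            rw [h1]; exact h2
          · exact ih (by omega) (by omega) w hw (fun j hja hjb => hj j hja (by omega))
        rw [hAs m]
        refine ⟨hwm, ?_⟩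
        rw [hj (m+1) (by omega) le_rfl]
        exact (hAs m ▸ hvsm).2
    have hext : ∀ t ∈ T, vs t = v₀ t := ((hInv n).2.2.2 hvs).1
    have hmain : ∀ w : V → ℝ, (∀ t ∈ T, w t = v₀ t) → w ≠ vs →
        List.Lex (· < ·) (gradList G ℓ vs) (gradList G ℓ w) := by
      intro w hw hne
      by_cases hall : ∀ j, 1 ≤ j → j ≤ n → topf G ℓ j w = topf G ℓ j vs
      · exact absurd (huniqAn w vs (hmem n hn le_rfl w hw hall) hvs) hne
      · push_neg at hall
        obtain ⟨j0, hj01, hj0n, hj0ne⟩ := hall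
        have hex : ∃ j, 1 ≤ j ∧ j ≤ n ∧ topf G ℓ j w ≠ topf G ℓ j vs :=
          ⟨j0, hj01, hj0n, hj0ne⟩
        set k := Nat.find hex with hkdef
        obtain ⟨hk1, hkn, hkne⟩ := Nat.find_spec hex
        have hprev : ∀ j, 1 ≤ j → j < k → topf G ℓ j w = topf G ℓ j vs := by
          intro j h1 hjk
          by_contra hne'
          exact Nat.find_min hex hjk ⟨h1, by omega, hne'⟩
        have hle : topf G ℓ k vs ≤ topf G ℓ k w := by
          obtain ⟨m, hmk⟩ : ∃ m, k = m + 1 := ⟨k - 1, by omega⟩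
          rw [hmk]
          rcases Nat.eq_zero_or_pos m with rfl | hm1
          · by_cases hwB : w ∈ B
            · exact hminval 0 vs w (hchain_le 1 n (by omega) hvs) (hA0 ▸ hwB)
            · have h2 : topf G ℓ 1 v₀ < topf G ℓ 1 w := by
                by_contra hc
                exact hwB ⟨hw, not_lt.1 hc⟩
              have h3 : topf G ℓ 1 vs ≤ topf G ℓ 1 v₀ := ((hInv n).2.2.2 hvs).2
              exact h3.trans h2.le
          · have hwm : w ∈ A m := hmem m hm1 (by omega) w hw
              (fun j hja hjb => hprev j hja (by omega))
            exact hminval m vs w (hchain_le (m+1) n (by omega) hvs) hwm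
        have hlt : topf G ℓ k vs < topf G ℓ k w :=
          hle.lt_of_ne (fun hc => hkne hc.symm)
        have hpre : ∀ j, j ≤ k - 1 →
            ((gradList G ℓ vs).take j).sum = ((gradList G ℓ w).take j).sum := by
          intro j hj
          rcases Nat.eq_zero_or_pos j with rfl | hj1
          · simp
          · rw [hps vs j (by omega), hps w j (by omega)]
            exact (hprev j hj1 (by omega)).symm
        have hlen1 : k - 1 < (gradList G ℓ vs).length := by rw [gradList_length]; omega
        have hlen2 : k - 1 < (gradList G ℓ w).length := by rw [gradList_length]; omega
        refine lex_of_get (k-1) _ _ hlen1 hlen2 ?_ ?_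
        · intro j hj
          have h1 : j < (gradList G ℓ vs).length := by omega
          have h2 : j < (gradList G ℓ w).length := by omega
          have e1 := List.sum_take_succ (gradList G ℓ vs) j h1
          have e2 := List.sum_take_succ (gradList G ℓ w) j h2
          have q1 := hpre j (by omega)
          have q2 := hpre (j+1) (by omega)
          rw [e1, e2] at q2
          simp only [List.get_eq_getElem]
          linarith
        · have e1 := List.sum_take_succ (gradList G ℓ vs) (k-1) hlen1
          have e2 := List.sum_take_succ (gradList G ℓ w) (k-1) hlen2
          have q1 := hpre (k-1) le_rfl
          have q2 : ((gradList G ℓ vs).take k).sum < ((gradList G ℓ w).take k).sum := by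
            rw [hps vs k hkn, hps w k hkn]; exact hlt
          rw [show k - 1 + 1 = k from by omega] at e1 e2
          rw [e1, e2] at q2
          simp only [List.get_eq_getElem]
          linarith
    refine ⟨vs, ⟨hext, hmain⟩, ?_⟩
    intro y hy
    by_contra hney
    have h1 := hy.2 vs hext (fun hc => hney (by rw [← hc]))
    have h2 := hmain y hy.1 hney
    exact lex_asymm h2 h1
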